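/- arXiv:2510.08486 — 2 statements merged into one kernel-verified Lean document; each statement's English description precedes it below -/
import Mathlib

section
/- Let p be an odd prime and K_p the p-adic numbers. Let a, b, d be integers with d squarefree, p dividing d, and p not dividing 2a(a^2-4b). Then there is no point (x,y) in Q_p × Q_p satisfying d·y^2 = (a^2-4b)·x^4 - 2·a·d·x^2 + d^2. -/
section helpers

variable {p : ℕ} [Fact p.Prime]

private lemma val_pow (x : ℚ_[p]) (hx : x ≠ 0) (n : ℕ) :
    (x ^ n).valuation = n * x.valuation := by
  induction n with
  | zero => simp [Padic.valuation_one]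
  | succ k ih =>
      rw [pow_succ, Padic.valuation_mul (pow_ne_zero _ hx) hx, ih]
      push_cast; ring

private lemma val_neg (x : ℚ_[p]) (hx : x ≠ 0) : (-x).valuation = x.valuation := by
  have h1 : ((-1 : ℤ) : ℚ_[p]).valuation = 0 := by
    rw [Padic.valuation_intCast]
    simp [padicValInt]
  have h : (-x) = ((-1 : ℤ) : ℚ_[p]) * x := by push_cast; ring
  rw [h, Padic.valuation_mul (by push_cast; norm_num) hx, h1, zero_add]

/-- If `v(x) < v(y)` and `x ≠ 0`, then `x + y ≠ 0` and `v(x+y) = v(x)`. -/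
private lemma val_add (x y : ℚ_[p]) (hx : x ≠ 0)
    (h : x.valuation < y.valuation) :
    x + y ≠ 0 ∧ (x + y).valuation = x.valuation := by
  have hp1 : (1 : ℝ) < (p : ℝ) := by
    exact_mod_cast (Fact.out : p.Prime).one_lt
  by_cases hy : y = 0
  · simp [hy, hx]
  · have hnorm : ‖y‖ < ‖x‖ := by
      rw [Padic.norm_eq_zpow_neg_valuation hx, Padic.norm_eq_zpow_neg_valuation hy]
      exact zpow_lt_zpow_right₀ hp1 (by omega)
    have hmax : ‖x + y‖ = ‖x‖ := by
      rw [Padic.add_eq_max_of_ne (ne_of_gt hnorm)]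
      exact max_eq_left hnorm.le
    have hne : x + y ≠ 0 := by
      intro h0
      rw [h0, norm_zero] at hmax
      exact hx (norm_eq_zero.mp hmax.symm)
    refine ⟨hne, ?_⟩
    rw [Padic.norm_eq_zpow_neg_valuation hne, Padic.norm_eq_zpow_neg_valuation hx] at hmax
    have := zpow_right_injective₀ (by positivity) (ne_of_gt hp1) hmax
    omega

end helpers

/-- Let `p` be an odd prime, `a b d` integers with `d` squarefree, `p ∣ d`, and
`p ∤ 2a(a² - 4b)`. Then there is no point `(x, y) ∈ ℚ_p × ℚ_p` with
`d·y² = (a² - 4b)·x⁴ - 2·a·d·x² + d²`. -/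
theorem stmt0 (p : ℕ) [Fact p.Prime] (hp2 : p ≠ 2) (a b d : ℤ)
    (hd : Squarefree d) (hpd : (p : ℤ) ∣ d)
    (hu : ¬ (p : ℤ) ∣ 2 * a * (a ^ 2 - 4 * b)) :
    ¬ ∃ x y : ℚ_[p],
      (d : ℚ_[p]) * y ^ 2 =
        ((a ^ 2 - 4 * b : ℤ) : ℚ_[p]) * x ^ 4
          - ((2 * a * d : ℤ) : ℚ_[p]) * x ^ 2 + ((d ^ 2 : ℤ) : ℚ_[p]) := by
  have hp : p.Prime := Fact.out
  rintro ⟨x, y, hxy⟩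
  have hd0 : d ≠ 0 := hd.ne_zero
  have h2a : ¬ (p : ℤ) ∣ 2 * a := fun h => hu (h.mul_right _)
  have hc : ¬ (p : ℤ) ∣ (a ^ 2 - 4 * b) := fun h => hu (h.mul_left _)
  have h2a0 : 2 * a ≠ 0 := fun h => h2a (h ▸ dvd_zero _)
  have hc0 : (a ^ 2 - 4 * b) ≠ 0 := fun h => hc (h ▸ dvd_zero _)
  -- valuation of d is 1
  have hvd : ((d : ℤ) : ℚ_[p]).valuation = 1 := by
    rw [Padic.valuation_intCast]
    have h1 : 1 ≤ padicValInt p d := by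
      have := (padicValInt_dvd_iff (p := p) 1 d).mp (by simpa using hpd)
      omega
    have h2 : padicValInt p d < 2 := by
      by_contra h
      have hdvd : ((p : ℤ)) ^ 2 ∣ d := (padicValInt_dvd_iff (p := p) 2 d).mpr (by omega)
      have := hd (p : ℤ) (by rwa [← sq])
      rw [Int.isUnit_iff] at this
      have := hp.two_le
      omega
    omega
  -- notation
  set C1 : ℚ_[p] := ((a ^ 2 - 4 * b : ℤ) : ℚ_[p]) with hC1def
  set C2 : ℚ_[p] := ((2 * a * d : ℤ) : ℚ_[p]) with hC2def
  set C3 : ℚ_[p] := ((d ^ 2 : ℤ) : ℚ_[p]) with hC3def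
  have hC1ne : C1 ≠ 0 := Int.cast_ne_zero.mpr hc0
  have hC2ne : C2 ≠ 0 := Int.cast_ne_zero.mpr (mul_ne_zero h2a0 hd0)
  have hC3ne : C3 ≠ 0 := Int.cast_ne_zero.mpr (pow_ne_zero _ hd0)
  have hvC1 : C1.valuation = 0 := by
    rw [hC1def, Padic.valuation_intCast, padicValInt.eq_zero_of_not_dvd hc]
    rfl
  have hvC2 : C2.valuation = 1 := by
    have h : C2 = ((2 * a : ℤ) : ℚ_[p]) * ((d : ℤ) : ℚ_[p]) := by
      rw [hC2def]; push_cast; ring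
    rw [h, Padic.valuation_mul (Int.cast_ne_zero.mpr h2a0) (Int.cast_ne_zero.mpr hd0),
      hvd, Padic.valuation_intCast, padicValInt.eq_zero_of_not_dvd h2a]
    rfl
  have hvC3 : C3.valuation = 2 := by
    have h : C3 = ((d : ℤ) : ℚ_[p]) ^ 2 := by
      rw [hC3def]; push_cast; ring
    rw [h, val_pow _ (Int.cast_ne_zero.mpr hd0), hvd]
    rfl
  -- key: the RHS is nonzero with even valuation (0 mod 2), LHS has odd valuation
  have key : ∃ v : ℤ, C1 * x ^ 4 - C2 * x ^ 2 + C3 ≠ 0 ∧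
      (C1 * x ^ 4 - C2 * x ^ 2 + C3).valuation = 2 * v := by
    by_cases hx : x = 0
    · exact ⟨1, by simpa [hx] using hC3ne, by simp [hx, hvC3]⟩
    set u : ℤ := x.valuation with hu
    have hA_ne : C1 * x ^ 4 ≠ 0 := mul_ne_zero hC1ne (pow_ne_zero _ hx)
    have hvA : (C1 * x ^ 4).valuation = 4 * u := by
      rw [Padic.valuation_mul hC1ne (pow_ne_zero _ hx), hvC1,
        val_pow _ hx]
      push_cast; ring
    have hB_ne : -(C2 * x ^ 2) ≠ 0 := neg_ne_zero.mpr (mul_ne_zero hC2ne (pow_ne_zero _ hx))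
    have hvB : (-(C2 * x ^ 2)).valuation = 1 + 2 * u := by
      rw [val_neg _ (mul_ne_zero hC2ne (pow_ne_zero _ hx)),
        Padic.valuation_mul hC2ne (pow_ne_zero _ hx), hvC2, val_pow _ hx]
      push_cast; ring
    rcases le_or_gt u 0 with hu0 | hu0
    · -- v = 2u, min is 4u
      refine ⟨2 * u, ?_⟩
      have hre : C1 * x ^ 4 - C2 * x ^ 2 + C3
          = C1 * x ^ 4 + (-(C2 * x ^ 2) + C3) := by ring
      rw [hre]
      by_cases hBC : -(C2 * x ^ 2) + C3 = 0
      · rw [hBC, add_zero]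
        exact ⟨hA_ne, by rw [hvA]; ring⟩
      · have hmin : (4 : ℤ) * u < (-(C2 * x ^ 2) + C3).valuation := by
          have := Padic.le_valuation_add (x := -(C2 * x ^ 2)) (y := C3) hBC
          rw [hvB, hvC3] at this
          have : min (1 + 2 * u) 2 ≤ (-(C2 * x ^ 2) + C3).valuation := this
          omega
        obtain ⟨hne, hval⟩ := val_add (C1 * x ^ 4) (-(C2 * x ^ 2) + C3) hA_ne (by rw [hvA]; exact hmin)
        exact ⟨hne, by rw [hval, hvA]; ring⟩
    · -- u ≥ 1, min is 2 (from C3)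
      refine ⟨1, ?_⟩
      have hre : C1 * x ^ 4 - C2 * x ^ 2 + C3
          = C3 + (-(C2 * x ^ 2) + C1 * x ^ 4) := by ring
      rw [hre]
      by_cases hBA : -(C2 * x ^ 2) + C1 * x ^ 4 = 0
      · rw [hBA, add_zero]
        exact ⟨hC3ne, by rw [hvC3]; norm_num⟩
      · have hmin : (2 : ℤ) < (-(C2 * x ^ 2) + C1 * x ^ 4).valuation := by
          obtain ⟨hne, hval⟩ := val_add (-(C2 * x ^ 2)) (C1 * x ^ 4) hB_ne (by rw [hvB, hvA]; omega)
          rw [hval, hvB]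
          omega
        obtain ⟨hne, hval⟩ := val_add C3 (-(C2 * x ^ 2) + C1 * x ^ 4) hC3ne (by rw [hvC3]; exact hmin)
        exact ⟨hne, by rw [hval, hvC3]; norm_num⟩
  obtain ⟨v, hne, hval⟩ := key
  rw [← hxy] at hne hval
  have hy : y ≠ 0 := by
    intro h0
    rw [h0] at hne
    simp at hne
  have hL : ((d : ℚ_[p]) * y ^ 2).valuation = 1 + 2 * y.valuation := by
    rw [Padic.valuation_mul (Int.cast_ne_zero.mpr hd0) (pow_ne_zero _ hy),
      hvd, val_pow _ hy]
    push_cast; ring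
  rw [hL] at hval
  omega
end

section
/- Let p be an odd prime, d a squarefree integer divisible by p, and a, b integers with p not dividing 2a(a^2-4b). For any x ∈ Q_p with x ≠ 0, writing α = v_p(x), the p-adic valuation of (a^2-4b)·x^4 - 2·a·d·x^2 + d^2 equals 2 if α ≥ 1, equals 0 if α = 0, and equals 4α if α < 0. In particular this valuation is always even. -/
private lemma val_int_of_not_dvd {p : ℕ} [Fact p.Prime] {n : ℤ} (h : ¬ (p : ℤ) ∣ n) :
    ((n : ℚ_[p])).valuation = 0 := by
  rw [Padic.valuation_intCast, padicValInt.eq_zero_of_not_dvd h, Nat.cast_zero]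

private lemma val_add_of_lt {p : ℕ} [Fact p.Prime] {x y : ℚ_[p]} (hx : x ≠ 0) (hy : y ≠ 0)
    (h : x.valuation < y.valuation) :
    x + y ≠ 0 ∧ (x + y).valuation = x.valuation := by
  have hp1 : (1 : ℝ) < (p : ℝ) := by exact_mod_cast (Fact.out : p.Prime).one_lt
  have hnorm : ‖y‖ < ‖x‖ := by
    rw [Padic.norm_eq_zpow_neg_valuation hx, Padic.norm_eq_zpow_neg_valuation hy]
    exact zpow_lt_zpow_right₀ hp1 (neg_lt_neg h)
  have hmax : ‖x + y‖ = ‖x‖ := by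
    rw [Padic.add_eq_max_of_ne hnorm.ne', max_eq_left hnorm.le]
  have hxy : x + y ≠ 0 := by
    intro h0; rw [h0, norm_zero] at hmax
    exact hx (norm_eq_zero.mp hmax.symm)
  refine ⟨hxy, ?_⟩
  rw [Padic.norm_eq_zpow_neg_valuation hxy, Padic.norm_eq_zpow_neg_valuation hx] at hmax
  have := zpow_right_injective₀ (by linarith : (0:ℝ) < p) hp1.ne' hmax
  omega

private lemma val_neg_s1 {p : ℕ} [Fact p.Prime] {y : ℚ_[p]} (hy : y ≠ 0) :
    (-y).valuation = y.valuation := by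
  have hp1 : (1 : ℝ) < (p : ℝ) := by exact_mod_cast (Fact.out : p.Prime).one_lt
  have hy' : (-y) ≠ 0 := neg_ne_zero.mpr hy
  have : ‖-y‖ = ‖y‖ := norm_neg y
  rw [Padic.norm_eq_zpow_neg_valuation hy', Padic.norm_eq_zpow_neg_valuation hy] at this
  have := zpow_right_injective₀ (by linarith : (0:ℝ) < p) hp1.ne' this
  omega

/-- Valuation of `(a²-4b)x⁴ - 2adx² + d²` in `ℚ_p`: it equals `2` if `v_p(x) ≥ 1`,
`0` if `v_p(x) = 0`, and `4·v_p(x)` if `v_p(x) < 0`; in particular it is always even. -/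
theorem stmt1 (p : ℕ) [Fact p.Prime] (hp2 : p ≠ 2) (a b d : ℤ)
    (hd : Squarefree d) (hpd : (p : ℤ) ∣ d)
    (hu : ¬ (p : ℤ) ∣ 2 * a * (a ^ 2 - 4 * b))
    (x : ℚ_[p]) (hx : x ≠ 0) :
    (1 ≤ x.valuation →
      (((a ^ 2 - 4 * b : ℤ) : ℚ_[p]) * x ^ 4 - ((2 * a * d : ℤ) : ℚ_[p]) * x ^ 2
        + ((d ^ 2 : ℤ) : ℚ_[p])).valuation = 2) ∧
    (x.valuation = 0 →
      (((a ^ 2 - 4 * b : ℤ) : ℚ_[p]) * x ^ 4 - ((2 * a * d : ℤ) : ℚ_[p]) * x ^ 2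
        + ((d ^ 2 : ℤ) : ℚ_[p])).valuation = 0) ∧
    (x.valuation < 0 →
      (((a ^ 2 - 4 * b : ℤ) : ℚ_[p]) * x ^ 4 - ((2 * a * d : ℤ) : ℚ_[p]) * x ^ 2
        + ((d ^ 2 : ℤ) : ℚ_[p])).valuation = 4 * x.valuation) ∧
    Even ((((a ^ 2 - 4 * b : ℤ) : ℚ_[p]) * x ^ 4 - ((2 * a * d : ℤ) : ℚ_[p]) * x ^ 2
        + ((d ^ 2 : ℤ) : ℚ_[p])).valuation) := by
  have hp : p.Prime := Fact.out
  set α := x.valuation with hα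
  -- basic non-divisibilities
  have hpc : ¬ (p : ℤ) ∣ (a ^ 2 - 4 * b) := fun h => hu (h.mul_left _)
  have hp2a : ¬ (p : ℤ) ∣ 2 * a := fun h => hu (h.mul_right _)
  obtain ⟨m, hm⟩ := hpd
  have hd0 : d ≠ 0 := hd.ne_zero
  have hm0 : m ≠ 0 := by rintro rfl; simp [hm] at hd0
  have hpm : ¬ (p : ℤ) ∣ m := by
    rintro ⟨k, hk⟩
    have h2 : (p : ℤ) * (p : ℤ) ∣ d := ⟨k, by rw [hm, hk]; ring⟩
    have h3 := Int.isUnit_iff.mp (hd _ h2)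
    have h4 := hp.one_lt
    omega
  -- cast nonzero facts
  have hpQ : ((p : ℤ) : ℚ_[p]) ≠ 0 := Int.cast_ne_zero.mpr (by exact_mod_cast hp.pos.ne')
  have hc0 : ((a ^ 2 - 4 * b : ℤ) : ℚ_[p]) ≠ 0 :=
    Int.cast_ne_zero.mpr (fun h => hpc (h ▸ dvd_zero _))
  have h2a0 : ((2 * a : ℤ) : ℚ_[p]) ≠ 0 :=
    Int.cast_ne_zero.mpr (fun h => hp2a (h ▸ dvd_zero _))
  have hm0' : ((m : ℤ) : ℚ_[p]) ≠ 0 := Int.cast_ne_zero.mpr hm0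
  have hdQ : ((d : ℤ) : ℚ_[p]) ≠ 0 := Int.cast_ne_zero.mpr hd0
  -- valuation of d
  have vd : ((d : ℤ) : ℚ_[p]).valuation = 1 := by
    rw [hm, Int.cast_mul, Padic.valuation_mul hpQ hm0', val_int_of_not_dvd hpm]
    simp [Padic.valuation_p]
  -- valuations of powers of x
  have hx2 : (x ^ 2).valuation = 2 * α := by
    rw [sq, Padic.valuation_mul hx hx]; ring
  have hx4 : (x ^ 4).valuation = 4 * α := by
    have : x ^ 4 = x ^ 2 * x ^ 2 := by ring
    rw [this, Padic.valuation_mul (pow_ne_zero 2 hx) (pow_ne_zero 2 hx), hx2]; ring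
  -- the three terms
  set y1 : ℚ_[p] := ((a ^ 2 - 4 * b : ℤ) : ℚ_[p]) * x ^ 4 with hy1
  set y2 : ℚ_[p] := -(((2 * a * d : ℤ) : ℚ_[p]) * x ^ 2) with hy2
  set y3 : ℚ_[p] := ((d ^ 2 : ℤ) : ℚ_[p]) with hy3
  have hy1ne : y1 ≠ 0 := mul_ne_zero hc0 (pow_ne_zero 4 hx)
  have hy2ne' : ((2 * a * d : ℤ) : ℚ_[p]) * x ^ 2 ≠ 0 :=
    mul_ne_zero (Int.cast_ne_zero.mpr (mul_ne_zero (fun h => hp2a (h ▸ dvd_zero _)) hd0))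
      (pow_ne_zero 2 hx)
  have hy2ne : y2 ≠ 0 := neg_ne_zero.mpr hy2ne'
  have hy3ne : y3 ≠ 0 := Int.cast_ne_zero.mpr (pow_ne_zero 2 hd0)
  have v1 : y1.valuation = 4 * α := by
    rw [hy1, Padic.valuation_mul hc0 (pow_ne_zero 4 hx), val_int_of_not_dvd hpc, hx4]; ring
  have v2 : y2.valuation = 2 * α + 1 := by
    rw [hy2, val_neg_s1 hy2ne']
    have : ((2 * a * d : ℤ) : ℚ_[p]) = ((2 * a : ℤ) : ℚ_[p]) * ((d : ℤ) : ℚ_[p]) := by push_cast; ring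
    rw [this, mul_assoc, Padic.valuation_mul h2a0 (mul_ne_zero hdQ (pow_ne_zero 2 hx)),
      Padic.valuation_mul hdQ (pow_ne_zero 2 hx), val_int_of_not_dvd hp2a, vd, hx2]
    ring
  have v3 : y3.valuation = 2 := by
    have : y3 = ((d : ℤ) : ℚ_[p]) * ((d : ℤ) : ℚ_[p]) := by rw [hy3]; push_cast; ring
    rw [this, Padic.valuation_mul hdQ hdQ, vd]; norm_num
  have hE : (((a ^ 2 - 4 * b : ℤ) : ℚ_[p]) * x ^ 4 - ((2 * a * d : ℤ) : ℚ_[p]) * x ^ 2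
        + ((d ^ 2 : ℤ) : ℚ_[p])) = y1 + y2 + y3 := by rw [hy1, hy2, hy3]; ring
  rw [hE]
  -- three cases
  have case1 : 1 ≤ α → (y1 + y2 + y3).valuation = 2 := by
    intro h1
    have h12 := val_add_of_lt hy2ne hy1ne (by omega)
    rw [add_comm y2 y1] at h12
    have h123 := val_add_of_lt hy3ne h12.1 (by omega)
    rw [add_comm y3 _] at h123
    omega
  have case2 : α = 0 → (y1 + y2 + y3).valuation = 0 := by
    intro h1
    have h12 := val_add_of_lt hy1ne hy2ne (by omega)
    have h123 := val_add_of_lt h12.1 hy3ne (by omega)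
    omega
  have case3 : α < 0 → (y1 + y2 + y3).valuation = 4 * α := by
    intro h1
    have h12 := val_add_of_lt hy1ne hy2ne (by omega)
    have h123 := val_add_of_lt h12.1 hy3ne (by omega)
    omega
  refine ⟨case1, case2, case3, ?_⟩
  rcases lt_trichotomy α 0 with h | h | h
  · rw [case3 h]; exact ⟨2 * α, by ring⟩
  · rw [case2 h]; exact Even.zero
  · rw [case1 (by omega)]; exact ⟨1, by ring⟩
end
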